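/- Fix d ≥ 3 and 1 ≤ j ≤ d−1, and let A_j = 𝓛_d ∖ {a_j} where a_i = cos(iπ/d). Then for every interior index i ≠ j with 1 ≤ i ≤ d−1, the fundamental Lagrange polynomial satisfies |ℓ(A_j, a_i; a_j)| = 1, and consequently Σ_{a∈A_j} |ℓ(A_j, a; a_j)| ≥ d − 2, so the Lebesgue constant of A_j on [−1,1] is at least d − 2. -/

import Mathlib

open Real Finset

/-- The Chebyshev–Lobatto points of degree `d`. -/
noncomputable def lobatto (d : ℕ) : Finset ℝ :=
  (Finset.range (d + 1)).image (fun j : ℕ => Real.cos (j * π / d))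

/-- The fundamental Lagrange interpolation polynomial (as a function) at node `a`. -/
noncomputable def lagBasis (A : Finset ℝ) (a : ℝ) (x : ℝ) : ℝ :=
  ∏ b ∈ A.erase a, (x - b) / (a - b)

/-- The Lebesgue constant of the node set `A` with respect to `[-1,1]`. -/
noncomputable def leb (A : Finset ℝ) : ℝ :=
  ⨆ x ∈ Set.Icc (-1 : ℝ) 1, ∑ a ∈ A, |lagBasis A a x|

noncomputable def pt (d k : ℕ) : ℝ := Real.cos (k * π / d)

noncomputable def sn (d m : ℕ) : ℝ := Real.sin (m * π / (2 * d))

lemma sn_pos {d m : ℕ} (h1 : 1 ≤ m) (h2 : m < 2 * d) : 0 < sn d m := by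
  have hd : 0 < d := by omega
  apply Real.sin_pos_of_pos_of_lt_pi
  · positivity
  · rw [div_lt_iff₀ (by positivity)]
    have : (m : ℝ) < 2 * d := by exact_mod_cast h2
    nlinarith [Real.pi_pos]

lemma sn_refl {d m : ℕ} (h : m ≤ 2 * d) (hd : 0 < d) : sn d (2 * d - m) = sn d m := by
  unfold sn
  have : ((2 * d - m : ℕ) : ℝ) = 2 * d - m := by push_cast [h]; ring
  rw [this]
  have hd' : (2 * (d:ℝ)) ≠ 0 := by positivity
  rw [show (2 * (d:ℝ) - m) * π / (2 * d) = π - m * π / (2 * d) by field_simp]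
  exact Real.sin_pi_sub _

lemma abs_pt_sub_of_lt {d j k : ℕ} (hk : k < j) (h2 : j + k < 2 * d) :
    |pt d j - pt d k| = 2 * sn d (j + k) * sn d (j - k) := by
  have hd : 0 < d := by omega
  unfold pt
  rw [Real.cos_sub_cos]
  have e1 : ((j:ℝ) * π / d + k * π / d) / 2 = (j + k : ℕ) * π / (2 * d) := by
    push_cast; field_simp
  have e2 : ((j:ℝ) * π / d - k * π / d) / 2 = (j - k : ℕ) * π / (2 * d) := by
    push_cast [hk.le]; field_simp
  rw [e1, e2]
  have p1 : 0 < sn d (j + k) := sn_pos (by omega) h2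
  have p2 : 0 < sn d (j - k) := sn_pos (by omega) (by omega)
  show |-2 * sn d (j+k) * sn d (j-k)| = _
  rw [show (-2 : ℝ) * sn d (j+k) * sn d (j-k) = -(2 * sn d (j+k) * sn d (j-k)) by ring,
    abs_neg, abs_of_pos (by positivity)]

lemma Q_eval {d j : ℕ} (hj1 : 1 ≤ j) (hj2 : j < d) :
    ∏ k ∈ (range (d + 1)).erase j, |pt d j - pt d k|
      = 2 ^ (d - 1) * ((∏ m ∈ Icc 1 d, sn d m) * ∏ m ∈ Icc 1 (d - 1), sn d m) := by
  have hd : 0 < d := by omega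
  -- split index set
  have hsplit : (range (d + 1)).erase j = range j ∪ Ico (j + 1) (d + 1) := by
    ext k; simp [Finset.mem_erase, Finset.mem_range, Finset.mem_Ico]; omega
  have hdisj : Disjoint (range j) (Ico (j + 1) (d + 1)) := by
    simp [Finset.disjoint_left, Finset.mem_range, Finset.mem_Ico]; omega
  rw [hsplit, Finset.prod_union hdisj]
  -- left part
  have hL : ∏ k ∈ range j, |pt d j - pt d k|
      = ∏ m ∈ Icc 1 j, (2 * sn d (2 * j - m) * sn d m) := by
    apply Finset.prod_nbij' (fun k => j - k) (fun m => j - m)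
    · intro k hk; simp at hk ⊢; omega
    · intro m hm; simp at hm ⊢; omega
    · intro k hk; simp at hk; omega
    · intro m hm; simp at hm; omega
    · intro k hk
      simp only [Finset.mem_range] at hk
      rw [show 2 * j - (j - k) = j + k from by omega, ← abs_pt_sub_of_lt hk (by omega)]
  -- right part
  have hR : ∏ k ∈ Ico (j + 1) (d + 1), |pt d j - pt d k|
      = ∏ m ∈ Icc 1 (d - j), (2 * sn d (2 * j + m) * sn d m) := by
    apply Finset.prod_nbij' (fun k => k - j) (fun m => j + m)
    · intro k hk; simp at hk ⊢; omega
    · intro m hm; simp at hm ⊢; omega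
    · intro k hk; simp at hk; omega
    · intro m hm; simp at hm; omega
    · intro k hk
      simp only [Finset.mem_Ico] at hk
      rw [show 2 * j + (k - j) = k + j from by omega, abs_sub_comm,
        abs_pt_sub_of_lt (show j < k by omega) (by omega)]
  rw [hL, hR]
  have c1 : ∏ m ∈ Icc 1 j, (2 * sn d (2 * j - m) * sn d m)
      = 2 ^ j * ((∏ m ∈ Icc 1 j, sn d (2 * j - m)) * ∏ m ∈ Icc 1 j, sn d m) := by
    rw [Finset.prod_mul_distrib, Finset.prod_mul_distrib, Finset.prod_const, Nat.card_Icc,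
      show j + 1 - 1 = j from by omega]
    ring
  have c2 : ∏ m ∈ Icc 1 (d - j), (2 * sn d (2 * j + m) * sn d m)
      = 2 ^ (d - j) * ((∏ m ∈ Icc 1 (d - j), sn d (2 * j + m)) * ∏ m ∈ Icc 1 (d - j), sn d m) := by
    rw [Finset.prod_mul_distrib, Finset.prod_mul_distrib, Finset.prod_const, Nat.card_Icc,
      show d - j + 1 - 1 = d - j from by omega]
    ring
  have r1 : ∏ m ∈ Icc 1 j, sn d (2 * j - m) = ∏ m ∈ Icc j (2 * j - 1), sn d m := by
    apply Finset.prod_nbij' (fun m => 2 * j - m) (fun m => 2 * j - m)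
    · intro m hm; simp at hm ⊢; omega
    · intro m hm; simp at hm ⊢; omega
    · intro m hm; simp at hm; omega
    · intro m hm; simp at hm; omega
    · intro m hm; rfl
  have r2 : ∏ m ∈ Icc 1 (d - j), sn d (2 * j + m) = ∏ m ∈ Icc (2 * j + 1) (j + d), sn d m := by
    apply Finset.prod_nbij' (fun m => 2 * j + m) (fun m => m - 2 * j)
    · intro m hm; simp at hm ⊢; omega
    · intro m hm; simp at hm ⊢; omega
    · intro m hm; simp at hm; omega
    · intro m hm; simp at hm; omega
    · intro m hm; rfl
  rw [c1, c2, r1, r2]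
  set X1 := ∏ m ∈ Icc j (2 * j - 1), sn d m with hX1
  set X2 := ∏ m ∈ Icc (2 * j + 1) (j + d), sn d m with hX2
  set A := ∏ m ∈ Icc 1 j, sn d m with hA
  set B := ∏ m ∈ Icc 1 (d - j), sn d m with hB
  set C := ∏ m ∈ Icc j d, sn d m with hC
  set D := ∏ m ∈ Icc (d - j) (d - 1), sn d m with hD
  set P1 := ∏ m ∈ Icc 1 d, sn d m with hP1
  set P2 := ∏ m ∈ Icc 1 (d - 1), sn d m with hP2
  have merge : X1 * sn d (2 * j) * X2 = ∏ m ∈ Icc j (j + d), sn d m := by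
    rw [show Icc j (j + d) = Icc j (2 * j - 1) ∪ Icc (2 * j) (j + d) from by
        ext m; simp; omega,
      Finset.prod_union (by simp [Finset.disjoint_left]; omega),
      show Icc (2 * j) (j + d) = insert (2 * j) (Icc (2 * j + 1) (j + d)) from by
        ext m; simp; omega,
      Finset.prod_insert (by simp)]
    ring
  have split : ∏ m ∈ Icc j (j + d), sn d m = C * ∏ m ∈ Icc (d + 1) (j + d), sn d m := by
    rw [show Icc j (j + d) = Icc j d ∪ Icc (d + 1) (j + d) from by ext m; simp; omega,
      Finset.prod_union (by simp [Finset.disjoint_left]; omega)]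
  have fold : ∏ m ∈ Icc (d + 1) (j + d), sn d m = D := by
    apply Finset.prod_nbij' (fun m => 2 * d - m) (fun m => 2 * d - m)
    · intro m hm; simp at hm ⊢; omega
    · intro m hm; simp at hm ⊢; omega
    · intro m hm; simp at hm; omega
    · intro m hm; simp at hm; omega
    · intro m hm; simp at hm
      exact (sn_refl (by omega) hd).symm
  have comb1 : A * C = sn d j * P1 := by
    rw [hA, hC, hP1, show Icc j d = insert j (Icc (j + 1) d) from by ext m; simp; omega,
      Finset.prod_insert (by simp),
      show Icc (1:ℕ) d = Icc 1 j ∪ Icc (j + 1) d from by ext m; simp; omega,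
      Finset.prod_union (by simp [Finset.disjoint_left]; omega)]
    ring
  have comb2 : B * D = sn d (d - j) * P2 := by
    rw [hB, hD, hP2,
      show Icc (d - j) (d - 1) = insert (d - j) (Icc (d - j + 1) (d - 1)) from by
        ext m; simp; omega,
      Finset.prod_insert (by simp),
      show Icc (1:ℕ) (d - 1) = Icc 1 (d - j) ∪ Icc (d - j + 1) (d - 1) from by
        ext m; simp; omega,
      Finset.prod_union (by simp [Finset.disjoint_left]; omega)]
    ring
  have scalar : sn d j * sn d (d - j) = (1 / 2) * sn d (2 * j) := by
    unfold sn
    have hcast : ((d - j : ℕ) : ℝ) = (d : ℝ) - j := by push_cast [hj2.le]; ring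
    rw [hcast, show ((d:ℝ) - j) * π / (2 * d) = π / 2 - j * π / (2 * d) from by
        field_simp,
      Real.sin_pi_div_two_sub,
      show ((2 * j : ℕ) : ℝ) * π / (2 * d) = 2 * ((j : ℝ) * π / (2 * d)) from by
        push_cast; ring,
      Real.sin_two_mul]
    ring
  have pos2j : sn d (2 * j) ≠ 0 := (sn_pos (by omega) (by omega)).ne'
  apply mul_left_cancel₀ pos2j
  have h2 : (2:ℝ) ^ j * 2 ^ (d - j) = 2 ^ d := by rw [← pow_add]; congr 1; omega
  have hd2 : (2:ℝ) ^ d = 2 * 2 ^ (d - 1) := by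
    rw [← pow_succ']; congr 1; omega
  calc sn d (2*j) * (2 ^ j * (X1 * A) * (2 ^ (d - j) * (X2 * B)))
      = (2^j * 2^(d-j)) * (A * B) * (X1 * sn d (2*j) * X2) := by ring
    _ = (2^j * 2^(d-j)) * (A * B) * (C * ∏ m ∈ Icc (d + 1) (j + d), sn d m) := by
        rw [merge, split]
    _ = (2:ℝ)^d * ((A * C) * (B * D)) := by rw [fold, h2]; ring
    _ = (2:ℝ)^d * ((sn d j * sn d (d - j)) * (P1 * P2)) := by rw [comb1, comb2]; ring
    _ = (2 * 2^(d-1)) * ((1/2) * sn d (2*j) * (P1 * P2)) := by rw [scalar, ← hd2]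
    _ = sn d (2*j) * (2 ^ (d - 1) * (P1 * P2)) := by ring

lemma pt_injOn {d : ℕ} (hd : 0 < d) {k l : ℕ} (hk : k ≤ d) (hl : l ≤ d)
    (h : pt d k = pt d l) : k = l := by
  have hπ := Real.pi_pos
  have hm : ∀ m : ℕ, m ≤ d → (m : ℝ) * π / d ∈ Set.Icc 0 π := by
    intro m hmd
    constructor
    · positivity
    · rw [div_le_iff₀ (by positivity)]
      have : (m : ℝ) ≤ d := by exact_mod_cast hmd
      nlinarith
  have := Real.injOn_cos (hm k hk) (hm l hl) h
  have hd' : (d : ℝ) ≠ 0 := by positivity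
  field_simp at this
  exact_mod_cast this

lemma prod_eq {d i j : ℕ} (hj1 : 1 ≤ j) (hj2 : j < d) (hi1 : 1 ≤ i) (hi2 : i < d)
    (hij : i ≠ j) :
    ∏ k ∈ ((range (d + 1)).erase j).erase i, |pt d j - pt d k|
      = ∏ k ∈ ((range (d + 1)).erase j).erase i, |pt d i - pt d k| := by
  have hd : 0 < d := by omega
  have hmemi : i ∈ (range (d + 1)).erase j := by simp [Finset.mem_erase]; omega
  have hmemj : j ∈ (range (d + 1)).erase i := by simp [Finset.mem_erase]; omega
  have h1 : |pt d j - pt d i| * ∏ k ∈ ((range (d + 1)).erase j).erase i, |pt d j - pt d k|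
      = 2 ^ (d - 1) * ((∏ m ∈ Icc 1 d, sn d m) * ∏ m ∈ Icc 1 (d - 1), sn d m) := by
    rw [Finset.mul_prod_erase _ (fun k => |pt d j - pt d k|) hmemi]; exact Q_eval hj1 hj2
  have h2 : |pt d i - pt d j| * ∏ k ∈ ((range (d + 1)).erase i).erase j, |pt d i - pt d k|
      = 2 ^ (d - 1) * ((∏ m ∈ Icc 1 d, sn d m) * ∏ m ∈ Icc 1 (d - 1), sn d m) := by
    rw [Finset.mul_prod_erase _ (fun k => |pt d i - pt d k|) hmemj]; exact Q_eval hi1 hi2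
  rw [Finset.erase_right_comm] at h2
  have hne : |pt d j - pt d i| ≠ 0 := by
    rw [abs_ne_zero, sub_ne_zero]
    intro h
    exact hij (pt_injOn hd (by omega) (by omega) h).symm
  apply mul_left_cancel₀ hne
  rw [h1, abs_sub_comm, h2]

lemma image_erase' {s : Finset ℕ} {f : ℕ → ℝ}
    (hf : ∀ x ∈ s, ∀ y ∈ s, f x = f y → x = y) {a : ℕ} (ha : a ∈ s) :
    (s.image f).erase (f a) = (s.erase a).image f := by
  ext x
  simp only [Finset.mem_erase, Finset.mem_image]
  constructor
  · rintro ⟨hx, k, hk, rfl⟩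
    exact ⟨k, ⟨fun h => hx (by rw [h]), hk⟩, rfl⟩
  · rintro ⟨k, ⟨hka, hk⟩, rfl⟩
    exact ⟨fun h => hka (hf k hk a ha h), k, hk, rfl⟩

lemma lag_abs {d i j : ℕ} (hj1 : 1 ≤ j) (hj2 : j < d) (hi1 : 1 ≤ i) (hi2 : i < d)
    (hij : i ≠ j) :
    |lagBasis ((lobatto d).erase (pt d j)) (pt d i) (pt d j)| = 1 := by
  have hd : 0 < d := by omega
  set f : ℕ → ℝ := fun k => Real.cos (k * π / d) with hf
  have hptf : ∀ k, pt d k = f k := fun k => rfl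
  have hinj : ∀ x ∈ range (d + 1), ∀ y ∈ range (d + 1), f x = f y → x = y := by
    intro x hx y hy h
    simp only [Finset.mem_range] at hx hy
    exact pt_injOn hd (by omega) (by omega) h
  have hinj' : ∀ x ∈ (range (d + 1)).erase j, ∀ y ∈ (range (d + 1)).erase j,
      f x = f y → x = y := fun x hx y hy h =>
    hinj x (Finset.mem_of_mem_erase hx) y (Finset.mem_of_mem_erase hy) h
  have hjm : j ∈ range (d + 1) := by simp; omega
  have him : i ∈ (range (d + 1)).erase j := by simp [Finset.mem_erase]; omega
  have e1 : (lobatto d).erase (pt d j) = ((range (d + 1)).erase j).image f := by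
    rw [hptf, lobatto]
    exact image_erase' hinj hjm
  have e2 : (((range (d + 1)).erase j).image f).erase (pt d i)
      = (((range (d + 1)).erase j).erase i).image f := by
    rw [hptf]
    exact image_erase' hinj' him
  rw [lagBasis, e1, e2, Finset.prod_image (fun x hx y hy h =>
    hinj' x (Finset.mem_of_mem_erase hx) y (Finset.mem_of_mem_erase hy) h)]
  rw [Finset.abs_prod]
  have : ∀ k ∈ ((range (d + 1)).erase j).erase i,
      |(pt d j - f k) / (pt d i - f k)| = |pt d j - pt d k| / |pt d i - pt d k| := by
    intro k hk; rw [abs_div, hptf k]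
  rw [Finset.prod_congr rfl this, Finset.prod_div_distrib, prod_eq hj1 hj2 hi1 hi2 hij]
  apply div_self
  rw [Finset.prod_ne_zero_iff]
  intro k hk
  simp only [Finset.mem_erase, Finset.mem_range] at hk
  rw [abs_ne_zero, sub_ne_zero]
  intro h
  exact hk.1 (pt_injOn hd (by omega) (by omega) h).symm

theorem lobatto_minus_one_point (d : ℕ) (hd : 3 ≤ d) (j : ℕ)
    (hj1 : 1 ≤ j) (hj2 : j ≤ d - 1) :
    (∀ i : ℕ, 1 ≤ i → i ≤ d - 1 → i ≠ j →
      |lagBasis ((lobatto d).erase (Real.cos (j * π / d))) (Real.cos (i * π / d))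
        (Real.cos (j * π / d))| = 1) ∧
    (d : ℝ) - 2 ≤ ∑ a ∈ (lobatto d).erase (Real.cos (j * π / d)),
      |lagBasis ((lobatto d).erase (Real.cos (j * π / d))) a (Real.cos (j * π / d))| ∧
    (d : ℝ) - 2 ≤ leb ((lobatto d).erase (Real.cos (j * π / d))) := by
  have hd0 : 0 < d := by omega
  have hjd : j < d := by omega
  simp only [show ∀ k : ℕ, Real.cos ((k : ℝ) * π / d) = pt d k from fun k => rfl]
  set A := (lobatto d).erase (pt d j) with hA
  have part1 : ∀ i : ℕ, 1 ≤ i → i ≤ d - 1 → i ≠ j →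
      |lagBasis A (pt d i) (pt d j)| = 1 := by
    intro i hi1 hi2 hij
    exact lag_abs hj1 hjd hi1 (by omega) hij
  have part2 : (d : ℝ) - 2 ≤ ∑ a ∈ A, |lagBasis A a (pt d j)| := by
    set f : ℕ → ℝ := fun k => Real.cos (k * π / d) with hf
    have hptf : ∀ k, pt d k = f k := fun k => rfl
    have hinj : ∀ x ≤ d, ∀ y ≤ d, f x = f y → x = y := fun x hx y hy h =>
      pt_injOn hd0 hx hy h
    set T := ((Icc 1 (d - 1)).erase j).image f with hT
    have hAimg : A = ((range (d + 1)).erase j).image f := by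
      rw [hA, hptf, lobatto]
      exact image_erase' (fun x hx y hy h =>
        hinj x (by simp at hx; omega) y (by simp at hy; omega) h) (by simp; omega)
    have hTsub : T ⊆ A := by
      rw [hT, hAimg]
      apply Finset.image_subset_image
      intro k hk
      simp only [Finset.mem_erase, Finset.mem_Icc] at hk
      simp only [Finset.mem_erase, Finset.mem_range]
      omega
    have hTsum : ∑ a ∈ T, |lagBasis A a (pt d j)| = (d : ℝ) - 2 := by
      rw [hT, Finset.sum_image (fun x hx y hy h =>
        hinj x (by simp at hx; omega) y (by simp at hy; omega) h)]
      have : ∀ i ∈ (Icc 1 (d - 1)).erase j, |lagBasis A (f i) (pt d j)| = 1 := by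
        intro i hi
        simp only [Finset.mem_erase, Finset.mem_Icc] at hi
        rw [← hptf]
        exact part1 i (by omega) (by omega) hi.1
      rw [Finset.sum_congr rfl this, Finset.sum_const, Finset.card_erase_of_mem
        (by simp [Finset.mem_Icc]; omega), Nat.card_Icc,
        show d - 1 + 1 - 1 - 1 = d - 2 from by omega, nsmul_eq_mul]
      push_cast [show 2 ≤ d from by omega]
      ring
    calc (d : ℝ) - 2 = ∑ a ∈ T, |lagBasis A a (pt d j)| := hTsum.symm
      _ ≤ ∑ a ∈ A, |lagBasis A a (pt d j)| :=
          Finset.sum_le_sum_of_subset_of_nonneg hTsub (fun a _ _ => abs_nonneg _)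
  refine ⟨part1, part2, ?_⟩
  -- the Lebesgue constant bound
  set G : ℝ → ℝ := fun x => ∑ a ∈ A, |lagBasis A a x| with hG
  have hGcont : Continuous G := by
    apply continuous_finset_sum
    intro a _
    apply Continuous.abs
    show Continuous fun x => ∏ b ∈ A.erase a, (x - b) / (a - b)
    apply continuous_finset_prod
    intro b _
    exact (continuous_id.sub continuous_const).div_const _
  obtain ⟨x0, hx0, hge⟩ :=
    (isCompact_Icc : IsCompact (Set.Icc (-1 : ℝ) 1)).exists_isMaxOn
      ⟨(-1 : ℝ), by norm_num [Set.mem_Icc]⟩ hGcont.continuousOn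
  have hbdd : BddAbove (Set.range fun x => ⨆ _ : x ∈ Set.Icc (-1 : ℝ) 1, G x) := by
    refine ⟨max (G x0) 0, ?_⟩
    rintro y ⟨x, rfl⟩
    dsimp only
    by_cases hx : x ∈ Set.Icc (-1 : ℝ) 1
    · rw [ciSup_pos hx]
      exact le_max_of_le_left (hge hx)
    · rw [ciSup_neg hx, Real.sSup_empty]
      exact le_max_right _ _
  have hmem : pt d j ∈ Set.Icc (-1 : ℝ) 1 := ⟨Real.neg_one_le_cos _, Real.cos_le_one _⟩
  calc (d : ℝ) - 2 ≤ G (pt d j) := part2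
    _ = ⨆ _ : pt d j ∈ Set.Icc (-1 : ℝ) 1, G (pt d j) := (ciSup_pos (f := fun _ => G (pt d j)) hmem).symm
    _ ≤ leb A := le_ciSup hbdd (pt d j)
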